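/- Let G be any two-by-two game and suppose the pairs of mixed quantum strategies (ν,μ) and (ν',μ') are equivalent as pairs. Then (ν,μ) is a mixed-strategy Nash equilibrium of G^Q if and only if (ν',μ') is a mixed-strategy Nash equilibrium of G^Q. -/

import Mathlib

noncomputable section

open MeasureTheory

local notation "ℍ" => Quaternion ℝ

instance : MeasurableSpace (Quaternion ℝ) := borel _
instance : BorelSpace (Quaternion ℝ) := ⟨rfl⟩

/-- The four real coordinates of a quaternion: `p = π₁(p) + π₂(p)i + π₃(p)j + π₄(p)k`. -/
def piQ (t : Fin 4) (p : ℍ) : ℝ := ![p.re, p.imI, p.imJ, p.imK] t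

/-- The standard inner product on ℍ ≅ ℝ⁴. -/
def qinner (p q : ℍ) : ℝ := ∑ t : Fin 4, piQ t p * piQ t q

/-- The quaternions `i`, `j`, `k`. -/
def qI : ℍ := ⟨0, 1, 0, 0⟩
def qJ : ℍ := ⟨0, 0, 1, 0⟩
def qK : ℍ := ⟨0, 0, 0, 1⟩

/-- A mixed quantum strategy: a Borel probability measure on the unit quaternions. -/
def IsMixed (μ : Measure ℍ) : Prop :=
  IsProbabilityMeasure μ ∧ μ {p : ℍ | ‖p‖ = 1} = 1

/-- Quantum payoff with payoff vector `X`: `P^Q(p,q) = Σ_t π_t(pq)² X_t`. -/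
def payoff (X : Fin 4 → ℝ) (p q : ℍ) : ℝ :=
  ∑ t : Fin 4, (piQ t (p * q)) ^ 2 * X t

/-- Expected payoff of a pair of mixed strategies. -/
def payoffM (X : Fin 4 → ℝ) (ν μ : Measure ℍ) : ℝ :=
  ∫ p, ∫ q, payoff X p q ∂μ ∂ν

/-- Mixed-strategy Nash equilibrium of the quantum game with payoff vectors `X`, `Y`. -/
def IsNash (X Y : Fin 4 → ℝ) (ν μ : Measure ℍ) : Prop :=
  IsMixed ν ∧ IsMixed μ ∧
    (∀ ν' : Measure ℍ, IsMixed ν' → payoffM X ν' μ ≤ payoffM X ν μ) ∧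
    (∀ μ' : Measure ℍ, IsMixed μ' → payoffM Y ν μ' ≤ payoffM Y ν μ)

/-- Equivalence of mixed quantum strategies. -/
def StratEquiv (μ μ' : Measure ℍ) : Prop :=
  ∀ p : ℍ, ‖p‖ = 1 → ∀ t : Fin 4,
    ∫ q, (piQ t (p * q)) ^ 2 ∂μ = ∫ q, (piQ t (p * q)) ^ 2 ∂μ'

/-- Equivalence of pairs of mixed strategies: `(ν,μ) ∼ (ν',μ')` iff there is a unit
quaternion `u` with `ν' ∼ ν·u` and `μ' ∼ u⁻¹·μ`. -/
def PairEquiv (ν μ ν' μ' : Measure ℍ) : Prop :=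
  ∃ u : ℍ, ‖u‖ = 1 ∧
    StratEquiv (Measure.map (fun p => p * u) ν) ν' ∧
    StratEquiv (Measure.map (fun q => u⁻¹ * q) μ) μ'

/-- A generic two-by-two game: all payoffs distinct and all pairwise sums distinct. -/
def Generic (X Y : Fin 4 → ℝ) : Prop :=
  Function.Injective X ∧ Function.Injective Y ∧
    (∀ s t s' t' : Fin 4, s < t → s' < t' → X s + X t = X s' + X t' → s = s' ∧ t = t') ∧
    (∀ s t s' t' : Fin 4, s < t → s' < t' → Y s + Y t = Y s' + Y t' → s = s' ∧ t = t')

/-- `K(p) = π₁(p)π₂(p)π₃(p)π₄(p)`. -/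
def K (p : ℍ) : ℝ := p.re * p.imI * p.imJ * p.imK

/-- Intertwined quadruple of quaternions. -/
def Intertwined (p q r s : ℍ) : Prop :=
  ∃ α : ℝ, α ≠ 0 ∧ ∀ X Y : ℝ, α * K (X • p + Y • q) = K (X • r + Y • s)

/-- Fully intertwined quadruple of quaternions. -/
def FullyIntertwined (p q r s : ℍ) : Prop :=
  Intertwined p q r s ∧ Intertwined p r q s

/-- `p` is an optimal response for Player One to the mixed strategy `μ`. -/
def Optimal₁ (X : Fin 4 → ℝ) (μ : Measure ℍ) (p : ℍ) : Prop :=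
  ‖p‖ = 1 ∧ ∀ p' : ℍ, ‖p'‖ = 1 → ∫ q, payoff X p' q ∂μ ≤ ∫ q, payoff X p q ∂μ

/-- `q` is an optimal response for Player Two to the mixed strategy `ν`. -/
def Optimal₂ (Y : Fin 4 → ℝ) (ν : Measure ℍ) (q : ℍ) : Prop :=
  ‖q‖ = 1 ∧ ∀ q' : ℍ, ‖q'‖ = 1 → ∫ p, payoff Y p q' ∂ν ≤ ∫ p, payoff Y p q ∂ν

section Aux

/-! ### Auxiliary lemmas -/

def eQ : Fin 4 → ℍ := ![1, qI, qJ, qK]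

@[simp] lemma qI_re : qI.re = 0 := rfl
@[simp] lemma qI_imI : qI.imI = 1 := rfl
@[simp] lemma qI_imJ : qI.imJ = 0 := rfl
@[simp] lemma qI_imK : qI.imK = 0 := rfl
@[simp] lemma qJ_re : qJ.re = 0 := rfl
@[simp] lemma qJ_imI : qJ.imI = 0 := rfl
@[simp] lemma qJ_imJ : qJ.imJ = 1 := rfl
@[simp] lemma qJ_imK : qJ.imK = 0 := rfl
@[simp] lemma qK_re : qK.re = 0 := rfl
@[simp] lemma qK_imI : qK.imI = 0 := rfl
@[simp] lemma qK_imJ : qK.imJ = 0 := rfl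
@[simp] lemma qK_imK : qK.imK = 1 := rfl
@[simp] lemma one_re' : (1 : ℍ).re = 1 := rfl
@[simp] lemma one_imI' : (1 : ℍ).imI = 0 := rfl
@[simp] lemma one_imJ' : (1 : ℍ).imJ = 0 := rfl
@[simp] lemma one_imK' : (1 : ℍ).imK = 0 := rfl

lemma eQ_norm (t : Fin 4) : ‖eQ t‖ = 1 := by
  have h : ∀ x : ℍ, ‖x‖ * ‖x‖ = 1 → ‖x‖ = 1 := by
    intro x hx; nlinarith [norm_nonneg x]
  fin_cases t <;> (apply h; rw [← Quaternion.normSq_eq_norm_mul_self]) <;>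
    simp [eQ, Quaternion.normSq_def']

/-- The key trace identity: `π₀(c ē_t b q) = π_t(b q c)`. -/
lemma keyIdG (t : Fin 4) (b c q : ℍ) :
    piQ 0 (c * star (eQ t) * b * q) = piQ t (b * q * c) := by
  fin_cases t <;>
  simp [piQ, eQ, Quaternion.re_mul, Quaternion.imI_mul, Quaternion.imJ_mul,
    Quaternion.imK_mul] <;> ring

/-- The key trace identity, special case: `π₀(c ē_t q) = π_t(q c)`. -/
lemma keyId1 (t : Fin 4) (c q : ℍ) :
    piQ 0 (c * star (eQ t) * q) = piQ t (q * c) := by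
  fin_cases t <;>
  simp [piQ, eQ, Quaternion.re_mul, Quaternion.imI_mul, Quaternion.imJ_mul,
    Quaternion.imK_mul] <;> ring

lemma piQ_sq_le (t : Fin 4) (a : ℍ) : piQ t a ^ 2 ≤ ‖a‖ ^ 2 := by
  have h : ‖a‖ ^ 2 = Quaternion.normSq a := by
    rw [sq, ← Quaternion.normSq_eq_norm_mul_self]
  rw [h]
  fin_cases t <;> simp [piQ, Quaternion.normSq_def'] <;>
    nlinarith [sq_nonneg a.re, sq_nonneg a.imI, sq_nonneg a.imJ, sq_nonneg a.imK]

lemma continuous_piQ (t : Fin 4) : Continuous (piQ t) := by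
  have h0 : Continuous fun p : ℍ => p.re := Quaternion.continuous_re
  have h1 : Continuous fun p : ℍ => p.imI := Quaternion.continuous_imI
  have h2 : Continuous fun p : ℍ => p.imJ := Quaternion.continuous_imJ
  have h3 : Continuous fun p : ℍ => p.imK := Quaternion.continuous_imK
  fin_cases t <;> simpa [piQ] using ‹_›

@[fun_prop]
lemma piQ_cont2 (t : Fin 4) {α : Type*} [TopologicalSpace α] {g : α → ℍ}
    (hg : Continuous g) : Continuous fun x => piQ t (g x) :=
  (continuous_piQ t).comp hg

@[fun_prop]
lemma payoff_cont2 (X : Fin 4 → ℝ) {α : Type*} [TopologicalSpace α] {g h : α → ℍ}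
    (hg : Continuous g) (hh : Continuous h) :
    Continuous fun x => payoff X (g x) (h x) := by
  unfold payoff
  apply continuous_finset_sum
  intro t _
  exact ((piQ_cont2 t (hg.mul hh)).pow 2).mul continuous_const

lemma measSphere : MeasurableSet {p : ℍ | ‖p‖ = 1} :=
  (continuous_norm.measurable (measurableSet_singleton (1:ℝ)) :
    MeasurableSet (norm ⁻¹' {(1:ℝ)}))

lemma ae_unit {μ : Measure ℍ} (hμ : IsMixed μ) : ∀ᵐ q ∂μ, ‖q‖ = 1 := by
  haveI := hμ.1
  have h0 : μ {q : ℍ | ‖q‖ = 1}ᶜ = 0 := by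
    rw [measure_compl measSphere (measure_ne_top μ _), hμ.2, measure_univ, tsub_self]
  exact mem_ae_iff.2 h0

lemma integrable_sq {μ : Measure ℍ} (hμ : IsMixed μ) {f : ℍ → ℍ} (hf : Continuous f)
    (hb : ∀ x : ℍ, ‖x‖ = 1 → ‖f x‖ ≤ 1) (t : Fin 4) :
    Integrable (fun q => piQ t (f q) ^ 2) μ := by
  haveI := hμ.1
  refine Integrable.mono' (integrable_const (1:ℝ))
    (Continuous.aestronglyMeasurable (by fun_prop)) ?_
  filter_upwards [ae_unit hμ] with q hq
  have h1 := piQ_sq_le t (f q)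
  have h2 := hb q hq
  rw [Real.norm_eq_abs, abs_of_nonneg (sq_nonneg _)]
  nlinarith [norm_nonneg (f q)]

/-- Expanding a payoff-type integral into a sum of coordinate integrals. -/
lemma expandP {μ : Measure ℍ} (hμ : IsMixed μ) (X : Fin 4 → ℝ) {g h : ℍ → ℍ}
    (hg : Continuous g) (hh : Continuous h)
    (hb : ∀ x : ℍ, ‖x‖ = 1 → ‖g x * h x‖ ≤ 1) :
    ∫ x, payoff X (g x) (h x) ∂μ
      = ∑ t : Fin 4, (∫ x, piQ t (g x * h x) ^ 2 ∂μ) * X t := by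
  simp only [payoff]
  rw [integral_finset_sum _ (fun t _ => (integrable_sq hμ (f := fun x => g x * h x) (hg.mul hh) hb t).mul_const (X t))]
  exact Finset.sum_congr rfl fun t _ => integral_mul_const (X t) _

lemma payoff_bound (X : Fin 4 → ℝ) {p q : ℍ} (hp : ‖p‖ = 1) (hq : ‖q‖ = 1) :
    ‖payoff X p q‖ ≤ ∑ t : Fin 4, |X t| := by
  rw [Real.norm_eq_abs, payoff]
  refine le_trans (Finset.abs_sum_le_sum_abs _ _) (Finset.sum_le_sum fun t _ => ?_)
  have h1 : piQ t (p * q) ^ 2 ≤ 1 := by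
    have := piQ_sq_le t (p * q)
    rwa [norm_mul, hp, hq, one_mul, one_pow] at this
  have h2 : (0:ℝ) ≤ piQ t (p * q) ^ 2 := sq_nonneg _
  calc |piQ t (p * q) ^ 2 * X t| = piQ t (p * q) ^ 2 * |X t| := by
        rw [abs_mul, abs_of_nonneg h2]
    _ ≤ 1 * |X t| := mul_le_mul_of_nonneg_right h1 (abs_nonneg _)
    _ = |X t| := one_mul _

lemma integrable_payoff_prod (X : Fin 4 → ℝ) {ν μ : Measure ℍ}
    (hν : IsMixed ν) (hμ : IsMixed μ) :
    Integrable (Function.uncurry (payoff X)) (ν.prod μ) := by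
  haveI := hν.1; haveI := hμ.1
  have hS := measSphere
  have h0 : (ν.prod μ) (({p : ℍ | ‖p‖ = 1} ×ˢ {p : ℍ | ‖p‖ = 1})ᶜ) = 0 := by
    have hsub : ({p : ℍ | ‖p‖ = 1} ×ˢ {p : ℍ | ‖p‖ = 1})ᶜ ⊆
        ({p : ℍ | ‖p‖ = 1}ᶜ ×ˢ (Set.univ : Set ℍ)) ∪
        ((Set.univ : Set ℍ) ×ˢ {p : ℍ | ‖p‖ = 1}ᶜ) := by
      intro z _
      simp only [Set.mem_compl_iff, Set.mem_prod, Set.mem_union, Set.mem_univ,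
        and_true, true_and, not_and_or] at *
      tauto
    have hν0 : ν {p : ℍ | ‖p‖ = 1}ᶜ = 0 := by
      rw [measure_compl hS (measure_ne_top _ _), hν.2, measure_univ, tsub_self]
    have hμ0 : μ {p : ℍ | ‖p‖ = 1}ᶜ = 0 := by
      rw [measure_compl hS (measure_ne_top _ _), hμ.2, measure_univ, tsub_self]
    refine measure_mono_null hsub (measure_union_null ?_ ?_) <;>
      rw [Measure.prod_prod] <;> simp [hν0, hμ0]
  have hcont : Continuous (Function.uncurry (payoff X)) := by
    have h : Function.uncurry (payoff X) = fun z : ℍ × ℍ => payoff X z.1 z.2 := rfl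
    rw [h]; fun_prop
  refine Integrable.mono' (integrable_const (∑ t : Fin 4, |X t|))
    hcont.aestronglyMeasurable ?_
  filter_upwards [mem_ae_iff.2 h0] with z hz
  exact payoff_bound X hz.1 hz.2

lemma payoff_swap (X : Fin 4 → ℝ) {ν μ : Measure ℍ} (hν : IsMixed ν) (hμ : IsMixed μ) :
    ∫ p, ∫ q, payoff X p q ∂μ ∂ν = ∫ q, ∫ p, payoff X p q ∂ν ∂μ := by
  haveI := hν.1; haveI := hμ.1
  exact integral_integral_swap (integrable_payoff_prod X hν hμ)

lemma mixed_map {ν : Measure ℍ} (hν : IsMixed ν) {f : ℍ → ℍ} (hf : Continuous f)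
    (hsphere : ∀ p : ℍ, ‖p‖ = 1 → ‖f p‖ = 1) : IsMixed (Measure.map f ν) := by
  haveI := hν.1
  haveI hP : IsProbabilityMeasure (Measure.map f ν) :=
    Measure.isProbabilityMeasure_map hf.measurable.aemeasurable
  refine ⟨hP, ?_⟩
  rw [Measure.map_apply hf.measurable measSphere]
  refine le_antisymm prob_le_one ?_
  calc (1:ENNReal) = ν {p : ℍ | ‖p‖ = 1} := hν.2.symm
    _ ≤ ν (f ⁻¹' {p : ℍ | ‖p‖ = 1}) := measure_mono fun p hp => hsphere p hp

lemma meas_int_right (X : Fin 4 → ℝ) (μ : Measure ℍ) [SFinite μ] :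
    StronglyMeasurable fun r : ℍ => ∫ q, payoff X r q ∂μ := by
  have hc : Continuous fun z : ℍ × ℍ => payoff X z.1 z.2 := by fun_prop
  exact hc.stronglyMeasurable.integral_prod_right'

lemma meas_int_left (Y : Fin 4 → ℝ) (ν : Measure ℍ) [SFinite ν] :
    StronglyMeasurable fun s : ℍ => ∫ p, payoff Y p s ∂ν := by
  have hc : Continuous fun z : ℍ × ℍ => payoff Y z.2 z.1 := by fun_prop
  exact hc.stronglyMeasurable.integral_prod_right'

section Transport

variable {u : ℍ} {ν μ ν' μ' : Measure ℍ}

lemma unit_ne_zero (hu : ‖u‖ = 1) : u ≠ 0 := by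
  intro e; rw [e] at hu; simp at hu

lemma unit_inv (hu : ‖u‖ = 1) : ‖u⁻¹‖ = 1 := by rw [norm_inv, hu]; norm_num

/-- Lemma A: the inner (second-player) integral transported by `μ' ∼ u⁻¹·μ`. -/
lemma innerA (hu : ‖u‖ = 1) (X : Fin 4 → ℝ) (hμ : IsMixed μ) (hμ' : IsMixed μ')
    (he : StratEquiv (Measure.map (fun q => u⁻¹ * q) μ) μ')
    {p : ℍ} (hp : ‖p‖ = 1) :
    ∫ q, payoff X p q ∂μ' = ∫ q, payoff X (p * u⁻¹) q ∂μ := by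
  have hb1 : ∀ x : ℍ, ‖x‖ = 1 → ‖p * x‖ ≤ 1 := fun x hx => by
    rw [norm_mul, hp, hx]; norm_num
  have hb2 : ∀ x : ℍ, ‖x‖ = 1 → ‖(p * u⁻¹) * x‖ ≤ 1 := fun x hx => by
    rw [norm_mul, norm_mul, hp, unit_inv hu, hx]; norm_num
  have e1 : ∫ q, payoff X p q ∂μ'
      = ∑ t : Fin 4, (∫ q, piQ t (p * q) ^ 2 ∂μ') * X t :=
    expandP hμ' X (g := fun _ => p) (h := fun q => q) continuous_const continuous_id hb1
  have e2 : ∫ q, payoff X (p * u⁻¹) q ∂μ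
      = ∑ t : Fin 4, (∫ q, piQ t ((p * u⁻¹) * q) ^ 2 ∂μ) * X t :=
    expandP hμ X (g := fun _ => p * u⁻¹) (h := fun q => q) continuous_const continuous_id hb2
  rw [e1, e2]
  refine Finset.sum_congr rfl fun t _ => ?_
  congr 1
  have emap : ∫ q, piQ t (p * q) ^ 2 ∂(Measure.map (fun q => u⁻¹ * q) μ)
      = ∫ q, piQ t (p * (u⁻¹ * q)) ^ 2 ∂μ := by
    refine integral_map ?_ (Continuous.aestronglyMeasurable ?_) <;> fun_prop
  rw [← he p hp t, emap]
  exact integral_congr_ae (Filter.Eventually.of_forall fun q => by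
    simp only [mul_assoc])

/-- Lemma B: the inner (first-player) integral transported by `ν' ∼ ν·u`. -/
lemma innerB (hu : ‖u‖ = 1) (Y : Fin 4 → ℝ) (hν : IsMixed ν) (hν' : IsMixed ν')
    (he : StratEquiv (Measure.map (fun p => p * u) ν) ν')
    {q : ℍ} (hq : ‖q‖ = 1) :
    ∫ p, payoff Y p q ∂ν' = ∫ p, payoff Y p (u * q) ∂ν := by
  have hb1 : ∀ x : ℍ, ‖x‖ = 1 → ‖x * q‖ ≤ 1 := fun x hx => by
    rw [norm_mul, hq, hx]; norm_num
  have hb2 : ∀ x : ℍ, ‖x‖ = 1 → ‖x * (u * q)‖ ≤ 1 := fun x hx => by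
    rw [norm_mul, norm_mul, hq, hu, hx]; norm_num
  have e1 : ∫ p, payoff Y p q ∂ν'
      = ∑ t : Fin 4, (∫ p, piQ t (p * q) ^ 2 ∂ν') * Y t :=
    expandP hν' Y (g := fun p => p) (h := fun _ => q) continuous_id continuous_const hb1
  have e2 : ∫ p, payoff Y p (u * q) ∂ν
      = ∑ t : Fin 4, (∫ p, piQ t (p * (u * q)) ^ 2 ∂ν) * Y t :=
    expandP hν Y (g := fun p => p) (h := fun _ => u * q) continuous_id continuous_const hb2
  rw [e1, e2]
  refine Finset.sum_congr rfl fun t _ => ?_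
  congr 1
  have hbnorm : ‖q * star (eQ t)‖ = 1 := by
    rw [norm_mul, Quaternion.norm_star, eQ_norm, hq]; norm_num
  have k1 : ∀ p : ℍ, piQ t (p * q) ^ 2 = piQ 0 (q * star (eQ t) * p) ^ 2 := fun p => by
    rw [keyId1 t q p]
  have k2 : ∀ p : ℍ, piQ 0 (q * star (eQ t) * (p * u)) ^ 2
      = piQ t (p * (u * q)) ^ 2 := fun p => by
    rw [keyId1 t q (p * u), mul_assoc]
  have emap : ∫ p, piQ 0 (q * star (eQ t) * p) ^ 2 ∂(Measure.map (fun p => p * u) ν)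
      = ∫ p, piQ 0 (q * star (eQ t) * (p * u)) ^ 2 ∂ν := by
    refine integral_map ?_ (Continuous.aestronglyMeasurable ?_) <;> fun_prop
  calc ∫ p, piQ t (p * q) ^ 2 ∂ν' = ∫ p, piQ 0 (q * star (eQ t) * p) ^ 2 ∂ν' :=
        integral_congr_ae (Filter.Eventually.of_forall fun p => k1 p)
    _ = ∫ p, piQ 0 (q * star (eQ t) * p) ^ 2 ∂(Measure.map (fun p => p * u) ν) :=
        (he (q * star (eQ t)) hbnorm 0).symm
    _ = ∫ p, piQ 0 (q * star (eQ t) * (p * u)) ^ 2 ∂ν := emap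
    _ = ∫ p, piQ t (p * (u * q)) ^ 2 ∂ν :=
        integral_congr_ae (Filter.Eventually.of_forall fun p => k2 p)

/-- Lemma C: first-player marginal of `ν'·u⁻¹` equals that of `ν`. -/
lemma innerC (hu : ‖u‖ = 1) (X : Fin 4 → ℝ) (hν : IsMixed ν) (hν' : IsMixed ν')
    (he : StratEquiv (Measure.map (fun p => p * u) ν) ν')
    {q : ℍ} (hq : ‖q‖ = 1) :
    ∫ p, payoff X p q ∂(Measure.map (fun p => p * u⁻¹) ν') = ∫ p, payoff X p q ∂ν := by
  have hu0 : u ≠ 0 := unit_ne_zero hu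
  have e0 : ∫ p, payoff X p q ∂(Measure.map (fun p => p * u⁻¹) ν')
      = ∫ p, payoff X (p * u⁻¹) q ∂ν' := by
    refine integral_map ?_ (Continuous.aestronglyMeasurable ?_) <;> fun_prop
  rw [e0]
  have hb1 : ∀ x : ℍ, ‖x‖ = 1 → ‖(x * u⁻¹) * q‖ ≤ 1 := fun x hx => by
    rw [norm_mul, norm_mul, hq, unit_inv hu, hx]; norm_num
  have hb2 : ∀ x : ℍ, ‖x‖ = 1 → ‖x * q‖ ≤ 1 := fun x hx => by
    rw [norm_mul, hq, hx]; norm_num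
  have e1 : ∫ p, payoff X (p * u⁻¹) q ∂ν'
      = ∑ t : Fin 4, (∫ p, piQ t ((p * u⁻¹) * q) ^ 2 ∂ν') * X t :=
    expandP hν' X (g := fun p => p * u⁻¹) (h := fun _ => q)
      (by fun_prop) continuous_const hb1
  have e2 : ∫ p, payoff X p q ∂ν
      = ∑ t : Fin 4, (∫ p, piQ t (p * q) ^ 2 ∂ν) * X t :=
    expandP hν X (g := fun p => p) (h := fun _ => q) continuous_id continuous_const hb2
  rw [e1, e2]
  refine Finset.sum_congr rfl fun t _ => ?_
  congr 1
  have hbnorm : ‖u⁻¹ * q * star (eQ t)‖ = 1 := by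
    rw [norm_mul, norm_mul, Quaternion.norm_star, eQ_norm, hq, unit_inv hu]; norm_num
  have k1 : ∀ p : ℍ, piQ t ((p * u⁻¹) * q) ^ 2
      = piQ 0 (u⁻¹ * q * star (eQ t) * p) ^ 2 := fun p => by
    rw [keyId1 t (u⁻¹ * q) p, mul_assoc]
  have k2 : ∀ p : ℍ, piQ 0 (u⁻¹ * q * star (eQ t) * (p * u)) ^ 2
      = piQ t (p * q) ^ 2 := fun p => by
    rw [keyId1 t (u⁻¹ * q) (p * u), mul_assoc p u _, mul_inv_cancel_left₀ hu0]
  have emap : ∫ p, piQ 0 (u⁻¹ * q * star (eQ t) * p) ^ 2 ∂(Measure.map (fun p => p * u) ν)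
      = ∫ p, piQ 0 (u⁻¹ * q * star (eQ t) * (p * u)) ^ 2 ∂ν := by
    refine integral_map ?_ (Continuous.aestronglyMeasurable ?_) <;> fun_prop
  calc ∫ p, piQ t ((p * u⁻¹) * q) ^ 2 ∂ν'
      = ∫ p, piQ 0 (u⁻¹ * q * star (eQ t) * p) ^ 2 ∂ν' :=
        integral_congr_ae (Filter.Eventually.of_forall fun p => k1 p)
    _ = ∫ p, piQ 0 (u⁻¹ * q * star (eQ t) * p) ^ 2 ∂(Measure.map (fun p => p * u) ν) :=
        (he (u⁻¹ * q * star (eQ t)) hbnorm 0).symm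
    _ = ∫ p, piQ 0 (u⁻¹ * q * star (eQ t) * (p * u)) ^ 2 ∂ν := emap
    _ = ∫ p, piQ t (p * q) ^ 2 ∂ν :=
        integral_congr_ae (Filter.Eventually.of_forall fun p => k2 p)

/-- Lemma D: second-player marginal of `u·μ'` equals that of `μ`. -/
lemma innerD (hu : ‖u‖ = 1) (Y : Fin 4 → ℝ) (hμ : IsMixed μ) (hμ' : IsMixed μ')
    (he : StratEquiv (Measure.map (fun q => u⁻¹ * q) μ) μ')
    {p : ℍ} (hp : ‖p‖ = 1) :
    ∫ q, payoff Y p q ∂(Measure.map (fun q => u * q) μ') = ∫ q, payoff Y p q ∂μ := by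
  have hu0 : u ≠ 0 := unit_ne_zero hu
  have e0 : ∫ q, payoff Y p q ∂(Measure.map (fun q => u * q) μ')
      = ∫ q, payoff Y p (u * q) ∂μ' := by
    refine integral_map ?_ (Continuous.aestronglyMeasurable ?_) <;> fun_prop
  rw [e0]
  have hb1 : ∀ x : ℍ, ‖x‖ = 1 → ‖p * (u * x)‖ ≤ 1 := fun x hx => by
    rw [norm_mul, norm_mul, hp, hu, hx]; norm_num
  have hb2 : ∀ x : ℍ, ‖x‖ = 1 → ‖p * x‖ ≤ 1 := fun x hx => by
    rw [norm_mul, hp, hx]; norm_num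
  have e1 : ∫ q, payoff Y p (u * q) ∂μ'
      = ∑ t : Fin 4, (∫ q, piQ t (p * (u * q)) ^ 2 ∂μ') * Y t :=
    expandP hμ' Y (g := fun _ => p) (h := fun q => u * q)
      continuous_const (by fun_prop) hb1
  have e2 : ∫ q, payoff Y p q ∂μ
      = ∑ t : Fin 4, (∫ q, piQ t (p * q) ^ 2 ∂μ) * Y t :=
    expandP hμ Y (g := fun _ => p) (h := fun q => q) continuous_const continuous_id hb2
  rw [e1, e2]
  refine Finset.sum_congr rfl fun t _ => ?_
  congr 1
  have hpu : ‖p * u‖ = 1 := by rw [norm_mul, hp, hu]; norm_num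
  have emap : ∫ q, piQ t (p * u * q) ^ 2 ∂(Measure.map (fun q => u⁻¹ * q) μ)
      = ∫ q, piQ t (p * u * (u⁻¹ * q)) ^ 2 ∂μ := by
    refine integral_map ?_ (Continuous.aestronglyMeasurable ?_) <;> fun_prop
  calc ∫ q, piQ t (p * (u * q)) ^ 2 ∂μ' = ∫ q, piQ t (p * u * q) ^ 2 ∂μ' :=
        integral_congr_ae (Filter.Eventually.of_forall fun q => by
          simp only [mul_assoc])
    _ = ∫ q, piQ t (p * u * q) ^ 2 ∂(Measure.map (fun q => u⁻¹ * q) μ) :=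
        (he (p * u) hpu t).symm
    _ = ∫ q, piQ t (p * u * (u⁻¹ * q)) ^ 2 ∂μ := emap
    _ = ∫ q, piQ t (p * q) ^ 2 ∂μ :=
        integral_congr_ae (Filter.Eventually.of_forall fun q => by
          simp only [mul_assoc, mul_inv_cancel_left₀ hu0])

/-- Symmetry of the first-coordinate strategy equivalence. -/
lemma symmR (hu : ‖u‖ = 1) (hν : IsMixed ν) (hν' : IsMixed ν')
    (he : StratEquiv (Measure.map (fun p => p * u) ν) ν') :
    StratEquiv (Measure.map (fun p => p * u⁻¹) ν') ν := by
  have hu0 : u ≠ 0 := unit_ne_zero hu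
  intro b hb t
  have e0 : ∫ q, piQ t (b * q) ^ 2 ∂(Measure.map (fun p => p * u⁻¹) ν')
      = ∫ q, piQ t (b * (q * u⁻¹)) ^ 2 ∂ν' := by
    refine integral_map ?_ (Continuous.aestronglyMeasurable ?_) <;> fun_prop
  rw [e0]
  have hcnorm : ‖u⁻¹ * star (eQ t) * b‖ = 1 := by
    rw [norm_mul, norm_mul, Quaternion.norm_star, eQ_norm, hb, unit_inv hu]; norm_num
  have k1 : ∀ q : ℍ, piQ t (b * (q * u⁻¹)) ^ 2
      = piQ 0 (u⁻¹ * star (eQ t) * b * q) ^ 2 := fun q => by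
    rw [keyIdG t b u⁻¹ q, mul_assoc]
  have k2 : ∀ q : ℍ, piQ 0 (u⁻¹ * star (eQ t) * b * (q * u)) ^ 2
      = piQ t (b * q) ^ 2 := fun q => by
    rw [keyIdG t b u⁻¹ (q * u), mul_assoc b (q * u) u⁻¹, mul_inv_cancel_right₀ hu0]
  have emap : ∫ q, piQ 0 (u⁻¹ * star (eQ t) * b * q) ^ 2 ∂(Measure.map (fun p => p * u) ν)
      = ∫ q, piQ 0 (u⁻¹ * star (eQ t) * b * (q * u)) ^ 2 ∂ν := by
    refine integral_map ?_ (Continuous.aestronglyMeasurable ?_) <;> fun_prop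
  calc ∫ q, piQ t (b * (q * u⁻¹)) ^ 2 ∂ν'
      = ∫ q, piQ 0 (u⁻¹ * star (eQ t) * b * q) ^ 2 ∂ν' :=
        integral_congr_ae (Filter.Eventually.of_forall fun q => k1 q)
    _ = ∫ q, piQ 0 (u⁻¹ * star (eQ t) * b * q) ^ 2 ∂(Measure.map (fun p => p * u) ν) :=
        (he (u⁻¹ * star (eQ t) * b) hcnorm 0).symm
    _ = ∫ q, piQ 0 (u⁻¹ * star (eQ t) * b * (q * u)) ^ 2 ∂ν := emap
    _ = ∫ q, piQ t (b * q) ^ 2 ∂ν :=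
        integral_congr_ae (Filter.Eventually.of_forall fun q => k2 q)

/-- Symmetry of the second-coordinate strategy equivalence. -/
lemma symmL (hu : ‖u‖ = 1) (hμ : IsMixed μ) (hμ' : IsMixed μ')
    (he : StratEquiv (Measure.map (fun q => u⁻¹ * q) μ) μ') :
    StratEquiv (Measure.map (fun q => (u⁻¹)⁻¹ * q) μ') μ := by
  have hu0 : u ≠ 0 := unit_ne_zero hu
  intro p hp t
  have hpu : ‖p * u‖ = 1 := by rw [norm_mul, hp, hu]; norm_num
  have e0 : ∫ q, piQ t (p * q) ^ 2 ∂(Measure.map (fun q => (u⁻¹)⁻¹ * q) μ')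
      = ∫ q, piQ t (p * ((u⁻¹)⁻¹ * q)) ^ 2 ∂μ' := by
    refine integral_map ?_ (Continuous.aestronglyMeasurable ?_) <;> fun_prop
  have emap : ∫ q, piQ t (p * u * q) ^ 2 ∂(Measure.map (fun q => u⁻¹ * q) μ)
      = ∫ q, piQ t (p * u * (u⁻¹ * q)) ^ 2 ∂μ := by
    refine integral_map ?_ (Continuous.aestronglyMeasurable ?_) <;> fun_prop
  rw [e0]
  calc ∫ q, piQ t (p * ((u⁻¹)⁻¹ * q)) ^ 2 ∂μ' = ∫ q, piQ t (p * u * q) ^ 2 ∂μ' :=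
        integral_congr_ae (Filter.Eventually.of_forall fun q => by
          simp only [inv_inv, mul_assoc])
    _ = ∫ q, piQ t (p * u * q) ^ 2 ∂(Measure.map (fun q => u⁻¹ * q) μ) :=
        (he (p * u) hpu t).symm
    _ = ∫ q, piQ t (p * u * (u⁻¹ * q)) ^ 2 ∂μ := emap
    _ = ∫ q, piQ t (p * q) ^ 2 ∂μ :=
        integral_congr_ae (Filter.Eventually.of_forall fun q => by
          simp only [mul_assoc, mul_inv_cancel_left₀ hu0])

/-- Forward direction of the main theorem. -/
lemma nash_forward (hu : ‖u‖ = 1) (X Y : Fin 4 → ℝ)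
    (hν : IsMixed ν) (hμ : IsMixed μ) (hν' : IsMixed ν') (hμ' : IsMixed μ')
    (heν : StratEquiv (Measure.map (fun p => p * u) ν) ν')
    (heμ : StratEquiv (Measure.map (fun q => u⁻¹ * q) μ) μ')
    (hN : IsNash X Y ν μ) : IsNash X Y ν' μ' := by
  haveI := hν.1; haveI := hμ.1; haveI := hν'.1; haveI := hμ'.1
  obtain ⟨-, -, h1, h2⟩ := hN
  have hRmap : ∀ ζ : Measure ℍ, IsMixed ζ → IsMixed (Measure.map (fun p => p * u⁻¹) ζ) :=
    fun ζ hζ => mixed_map hζ (by fun_prop)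
      (fun p hp => by rw [norm_mul, hp, unit_inv hu]; norm_num)
  have hLmap : ∀ ζ : Measure ℍ, IsMixed ζ → IsMixed (Measure.map (fun q => u * q) ζ) :=
    fun ζ hζ => mixed_map hζ (by fun_prop)
      (fun p hp => by rw [norm_mul, hp, hu]; norm_num)
  -- Step 1 for Player One
  have step1 : ∀ ζ : Measure ℍ, IsMixed ζ →
      payoffM X ζ μ' = payoffM X (Measure.map (fun p => p * u⁻¹) ζ) μ := by
    intro ζ hζ
    haveI := hζ.1
    have tr : ∫ p, (∫ q, payoff X p q ∂μ) ∂(Measure.map (fun p => p * u⁻¹) ζ)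
        = ∫ p, ∫ q, payoff X (p * u⁻¹) q ∂μ ∂ζ := by
      refine integral_map ?_ ((meas_int_right X μ).aestronglyMeasurable)
      fun_prop
    unfold payoffM
    rw [tr]
    refine integral_congr_ae ?_
    filter_upwards [ae_unit hζ] with p hp
    exact innerA hu X hμ hμ' heμ hp
  -- Key equality for Player One's value
  have eq1 : payoffM X ν' μ' = payoffM X ν μ := by
    rw [step1 ν' hν']
    unfold payoffM
    rw [payoff_swap X (hRmap ν' hν') hμ, payoff_swap X hν hμ]
    refine integral_congr_ae ?_
    filter_upwards [ae_unit hμ] with q hq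
    exact innerC hu X hν hν' heν hq
  -- Step 1 for Player Two
  have step1' : ∀ ζ : Measure ℍ, IsMixed ζ →
      payoffM Y ν' ζ = payoffM Y ν (Measure.map (fun q => u * q) ζ) := by
    intro ζ hζ
    haveI := hζ.1
    have tr : ∫ q, (∫ p, payoff Y p q ∂ν) ∂(Measure.map (fun q => u * q) ζ)
        = ∫ q, ∫ p, payoff Y p (u * q) ∂ν ∂ζ := by
      refine integral_map ?_ ((meas_int_left Y ν).aestronglyMeasurable)
      fun_prop
    unfold payoffM
    rw [payoff_swap Y hν' hζ, payoff_swap Y hν (hLmap ζ hζ), tr]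
    refine integral_congr_ae ?_
    filter_upwards [ae_unit hζ] with q hq
    exact innerB hu Y hν hν' heν hq
  have eq2 : payoffM Y ν' μ' = payoffM Y ν μ := by
    rw [step1' μ' hμ']
    unfold payoffM
    refine integral_congr_ae ?_
    filter_upwards [ae_unit hν] with p hp
    exact innerD hu Y hμ hμ' heμ hp
  refine ⟨hν', hμ', ?_, ?_⟩
  · intro ξ hξ
    rw [step1 ξ hξ, eq1]
    exact h1 _ (hRmap ξ hξ)
  · intro η hη
    rw [step1' η hη, eq2]
    exact h2 _ (hLmap η hη)

end Transport

end Aux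

/-- If `(ν,μ)` and `(ν',μ')` are equivalent pairs of mixed strategies, then
`(ν,μ)` is a Nash equilibrium of `G^Q` iff `(ν',μ')` is. -/
theorem nash_iff_of_pairEquiv (X Y : Fin 4 → ℝ) (ν μ ν' μ' : Measure ℍ)
    (hν : IsMixed ν) (hμ : IsMixed μ) (hν' : IsMixed ν') (hμ' : IsMixed μ')
    (hpair : PairEquiv ν μ ν' μ') :
    IsNash X Y ν μ ↔ IsNash X Y ν' μ' := by
  obtain ⟨u, hu, heν, heμ⟩ := hpair
  constructor
  · exact fun h => nash_forward hu X Y hν hμ hν' hμ' heν heμ h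
  · intro h
    exact nash_forward (unit_inv hu) X Y hν' hμ' hν hμ
      (symmR hu hν hν' heν) (symmL hu hμ hμ' heμ) h
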